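/- Let f : ℝⁿ → ℝ be a continuous function with f(x) > 0 for all x, and let u : ℝⁿ → ℝ be a twice continuously differentiable function that tends to 0 at infinity and satisfies Δu(x) = 2 f(x) u(x) for all x ∈ ℝⁿ. Then u is identically zero. In other words, the operator Δ - 2f is injective on C₀²(ℝⁿ). -/

import Mathlib

open Filter Set

/-- Second derivative test at a global max in one dimension. -/
lemma aux_second_deriv_nonpos {g : ℝ → ℝ} {d : ℝ}
    (hg : Differentiable ℝ g) (hd : HasDerivAt (deriv g) d 0)
    (hmax : ∀ y, g y ≤ g 0) : d ≤ 0 := by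
  by_contra hpos
  push_neg at hpos
  have h0 : deriv g 0 = 0 := by
    have : IsLocalMax g 0 := Filter.Eventually.of_forall hmax
    exact this.deriv_eq_zero
  have hslope := hasDerivAt_iff_tendsto_slope.1 hd
  have hev : ∀ᶠ x in nhdsWithin (0:ℝ) (Ioi 0), 0 < deriv g x := by
    have h1 : ∀ᶠ x in nhdsWithin (0:ℝ) ({0}ᶜ), 0 < slope (deriv g) 0 x :=
      hslope.eventually (eventually_gt_nhds hpos)
    have h2 : nhdsWithin (0:ℝ) (Ioi 0) ≤ nhdsWithin (0:ℝ) ({0}ᶜ) :=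
      nhdsWithin_mono _ (fun x hx => ne_of_gt hx)
    filter_upwards [h2 h1, self_mem_nhdsWithin] with x hx hx'
    have hx0 : (0:ℝ) < x := hx'
    rw [slope_def_field, h0, sub_zero, sub_zero, div_pos_iff] at hx
    rcases hx with ⟨h, _⟩ | ⟨_, h⟩
    · exact h
    · linarith
  obtain ⟨b, hb, hsub⟩ := mem_nhdsGT_iff_exists_Ioc_subset.1 hev
  have hb0 : (0:ℝ) < b := hb
  have hmono : StrictMonoOn g (Icc 0 b) := by
    apply strictMonoOn_of_deriv_pos (convex_Icc 0 b) hg.continuous.continuousOn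
    intro x hx
    rw [interior_Icc] at hx
    exact hsub ⟨hx.1, le_of_lt hx.2⟩
  have : g 0 < g b := hmono ⟨le_refl 0, le_of_lt hb0⟩ ⟨le_of_lt hb0, le_refl b⟩ hb0
  exact absurd (hmax b) (not_le.mpr this)

/-- Directional second derivative along a line. -/
lemma aux_line_deriv {E : Type*} [NormedAddCommGroup E] [NormedSpace ℝ E]
    {u : E → ℝ} (hu : ContDiff ℝ 2 u) (x v : E) :
    HasDerivAt (deriv (fun t : ℝ => u (x + t • v)))
      (fderiv ℝ (fderiv ℝ u) x v v) 0 := by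
  have hdiff : Differentiable ℝ u := hu.differentiable two_ne_zero
  have hL : ∀ t : ℝ, HasDerivAt (fun t : ℝ => x + t • v) v t := by
    intro t
    simpa using ((hasDerivAt_id t).smul_const v).const_add x
  have hg : ∀ t : ℝ, HasDerivAt (fun t : ℝ => u (x + t • v))
      (fderiv ℝ u (x + t • v) v) t := fun t =>
    ((hdiff (x + t • v)).hasFDerivAt).comp_hasDerivAt t (hL t)
  have hderiv_eq : deriv (fun t : ℝ => u (x + t • v))
      = fun t => fderiv ℝ u (x + t • v) v := by
    funext t; exact (hg t).deriv
  rw [hderiv_eq]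
  have hfd : ContDiff ℝ 1 (fderiv ℝ u) := hu.fderiv_right (by norm_num)
  have h2 : HasFDerivAt (fderiv ℝ u) (fderiv ℝ (fderiv ℝ u) x) x :=
    (hfd.differentiable one_ne_zero x).hasFDerivAt
  have hc : HasDerivAt (fun t : ℝ => fderiv ℝ u (x + t • v))
      (fderiv ℝ (fderiv ℝ u) x v) 0 := by
    have h2' : HasFDerivAt (fderiv ℝ u) (fderiv ℝ (fderiv ℝ u) x) (x + (0:ℝ) • v) := by
      simpa using h2
    have := h2'.comp_hasDerivAt (0:ℝ) (hL 0)
    exact this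
  have := hc.clm_apply (hasDerivAt_const (0:ℝ) v)
  simpa using this

/-- Under the hypotheses, u ≤ 0 everywhere. -/
lemma aux_nonpos
    {n : ℕ} (f u : EuclideanSpace ℝ (Fin n) → ℝ)
    (hf_pos : ∀ x, 0 < f x)
    (hu : ContDiff ℝ 2 u)
    (hu_zero : Filter.Tendsto u (Filter.cocompact (EuclideanSpace ℝ (Fin n))) (nhds 0))
    (heq : ∀ x, (∑ i : Fin n,
        iteratedFDeriv ℝ 2 u x ![EuclideanSpace.single i 1, EuclideanSpace.single i 1])
      = 2 * f x * u x) :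
    ∀ x, u x ≤ 0 := by
  by_contra hcon
  push_neg at hcon
  obtain ⟨x₀, hx₀⟩ := hcon
  have hev : ∀ᶠ x in Filter.cocompact (EuclideanSpace ℝ (Fin n)), u x ≤ u x₀ := by
    filter_upwards [hu_zero.eventually_lt_const hx₀] with x hx using le_of_lt hx
  obtain ⟨z, hz⟩ := hu.continuous.exists_forall_ge' x₀ hev
  have huz : 0 < u z := lt_of_lt_of_le hx₀ (hz x₀)
  have hterm : ∀ i : Fin n,
      iteratedFDeriv ℝ 2 u z ![EuclideanSpace.single i 1, EuclideanSpace.single i 1] ≤ 0 := by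
    intro i
    set v := EuclideanSpace.single i (1:ℝ)
    have hkey := aux_line_deriv hu z v
    have hmax : ∀ t : ℝ, (fun t : ℝ => u (z + t • v)) t ≤ (fun t : ℝ => u (z + t • v)) 0 := by
      intro t; simpa using hz (z + t • v)
    have hgdiff : Differentiable ℝ (fun t : ℝ => u (z + t • v)) := by
      have : ContDiff ℝ 2 (fun t : ℝ => u (z + t • v)) := by
        apply hu.comp
        exact (contDiff_const.add ((contDiff_id).smul contDiff_const))
      exact this.differentiable two_ne_zero
    have hle : fderiv ℝ (fderiv ℝ u) z v v ≤ 0 :=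
      aux_second_deriv_nonpos hgdiff hkey hmax
    rw [iteratedFDeriv_two_apply]
    simpa using hle
  have hsum : (∑ i : Fin n,
      iteratedFDeriv ℝ 2 u z ![EuclideanSpace.single i 1, EuclideanSpace.single i 1]) ≤ 0 :=
    Finset.sum_nonpos fun i _ => hterm i
  rw [heq z] at hsum
  have : 0 < 2 * f z * u z := by
    have := hf_pos z
    nlinarith
  linarith

/-- If `f : ℝⁿ → ℝ` is continuous and everywhere positive and `u` is a `C²` function
vanishing at infinity with `Δu = 2 f u`, then `u ≡ 0`: the Schrödinger operator `Δ - 2f`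
is injective on `C₀²(ℝⁿ)`. -/
theorem schrodinger_injective
    {n : ℕ} (hn : 1 ≤ n) (f u : EuclideanSpace ℝ (Fin n) → ℝ)
    (hf_cont : Continuous f) (hf_pos : ∀ x, 0 < f x)
    (hu : ContDiff ℝ 2 u)
    (hu_zero : Filter.Tendsto u (Filter.cocompact (EuclideanSpace ℝ (Fin n))) (nhds 0))
    (heq : ∀ x, (∑ i : Fin n,
        iteratedFDeriv ℝ 2 u x ![EuclideanSpace.single i 1, EuclideanSpace.single i 1])
      = 2 * f x * u x) :
    ∀ x, u x = 0 := by
  have h1 : ∀ x, u x ≤ 0 := aux_nonpos f u hf_pos hu hu_zero heq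
  have h2 : ∀ x, (-u) x ≤ 0 := by
    apply aux_nonpos f (-u) hf_pos hu.neg (by have := hu_zero.neg; rw [neg_zero] at this; exact this)
    intro x
    have : iteratedFDeriv ℝ 2 (-u) x = -iteratedFDeriv ℝ 2 u x := iteratedFDeriv_neg_apply
    simp only [this, ContinuousMultilinearMap.neg_apply, Pi.neg_apply]
    rw [Finset.sum_neg_distrib, heq x]
    ring
  intro x
  have := h2 x
  simp only [Pi.neg_apply, neg_nonpos] at this
  exact le_antisymm (h1 x) this
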